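/- Let α be a type and let fs be a finite list of DSF transfer functions on Set α, i.e., each element of fs is of the form x ↦ B ∪ (x \ D) ∪ C ∪ ((x \ CS) ∩ P) for some fixed subsets B, D, C, CS, P of α. Then the composition of all functions in fs (with the empty composition being the identity) is again a DSF transfer function: there exist subsets B', D', C', CS', P' of α such that the composed function equals x ↦ B' ∪ (x \ D') ∪ C' ∪ ((x \ CS') ∩ P') on every subset x of α. -/

import Mathlib

/-- A function on sets is a DSF transfer function if it has the form
`x ↦ B ∪ (x \ D) ∪ C ∪ ((x \ CS) ∩ P)` for fixed subsets `B, D, C, CS, P`. -/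
def IsDSFTransfer {α : Type*} (f : Set α → Set α) : Prop :=
  ∃ B D C CS P : Set α, ∀ x : Set α, f x = B ∪ (x \ D) ∪ C ∪ ((x \ CS) ∩ P)

/-- Normal form of a DSF transfer function: `x ↦ K ∪ (x ∩ M)`. -/
lemma dsf_normal_form {α : Type*} (fs : List (Set α → Set α))
    (hfs : ∀ f ∈ fs, IsDSFTransfer f) :
    ∃ K M : Set α, ∀ x : Set α, (fs.foldr (· ∘ ·) id) x = K ∪ (x ∩ M) := by
  induction fs with
  | nil =>
    refine ⟨∅, Set.univ, fun x => ?_⟩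
    simp
  | cons f fs ih =>
    obtain ⟨K, M, hKM⟩ := ih (fun g hg => hfs g (List.mem_cons_of_mem _ hg))
    obtain ⟨B, D, C, CS, P, hf⟩ := hfs f List.mem_cons_self
    refine ⟨B ∪ C ∪ ((K \ D) ∪ ((K \ CS) ∩ P)), M ∩ (Dᶜ ∪ (CSᶜ ∩ P)), fun x => ?_⟩
    have : (List.foldr (· ∘ ·) id (f :: fs)) x = f (K ∪ (x ∩ M)) := by
      simp [hKM x]
    rw [this, hf]
    ext a
    simp only [Set.mem_union, Set.mem_inter_iff, Set.mem_diff, Set.mem_compl_iff]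
    tauto

/-- The composition of a finite list of DSF transfer functions (with the empty
composition being the identity) is again a DSF transfer function. -/
theorem dsf_transfer_list_comp {α : Type*} (fs : List (Set α → Set α))
    (hfs : ∀ f ∈ fs, IsDSFTransfer f) :
    ∃ B' D' C' CS' P' : Set α, ∀ x : Set α,
      (fs.foldr (· ∘ ·) id) x = B' ∪ (x \ D') ∪ C' ∪ ((x \ CS') ∩ P') := by
  obtain ⟨K, M, h⟩ := dsf_normal_form fs hfs
  refine ⟨K, Mᶜ, ∅, Set.univ, ∅, fun x => ?_⟩
  rw [h x]
  ext a
  simp only [Set.mem_union, Set.mem_inter_iff, Set.mem_diff, Set.mem_compl_iff,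
    Set.mem_empty_iff_false, Set.mem_univ, not_not]
  tauto
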